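/- For every countable group Γ and every countable ordinal α, F_2 is not Borel reducible to the iterated Γ-jump J^α_Γ of the identity relation Δ(2). -/

import Mathlib

/-- The Γ-jump of an equivalence relation `E` on `X`. -/
def GammaJump (Γ : Type*) [Group Γ] {X : Type*} (E : X → X → Prop) :
    (Γ → X) → (Γ → X) → Prop :=
  fun x y => ∃ γ : Γ, ∀ α : Γ, E (x (γ⁻¹ * α)) (y α)

/-- A (Borel) equivalence relation: a carrier with a σ-algebra and a binary relation. -/
structure BorelEqvRel : Type 2 where
  carrier : Type 1
  ms : MeasurableSpace carrier
  rel : carrier → carrier → Prop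

/-- Borel reducibility between packaged equivalence relations. -/
def RedB (E F : BorelEqvRel) : Prop :=
  ∃ f : E.carrier → F.carrier, @Measurable _ _ E.ms F.ms f ∧
    ∀ x y, E.rel x y ↔ F.rel (f x) (f y)

/-- The Γ-jump of a packaged equivalence relation. -/
def jumpB (Γ : Type) [Group Γ] (R : BorelEqvRel) : BorelEqvRel where
  carrier := Γ → R.carrier
  ms := @MeasurableSpace.pi _ _ (fun _ => R.ms)
  rel := GammaJump Γ R.rel

/-- The direct sum of a family of packaged equivalence relations. -/
def sumB {ι : Type 1} (f : ι → BorelEqvRel) : BorelEqvRel where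
  carrier := Σ i : ι, (f i).carrier
  ms := letI := fun i => (f i).ms; inferInstance
  rel a b := ∃ (i : ι) (x y : (f i).carrier), (f i).rel x y ∧ a = ⟨i, x⟩ ∧ b = ⟨i, y⟩

/-- The Friedman–Stanley jump of a packaged equivalence relation. -/
def fsJumpB (R : BorelEqvRel) : BorelEqvRel where
  carrier := ℕ → R.carrier
  ms := @MeasurableSpace.pi _ _ (fun _ => R.ms)
  rel x y :=
    Set.range (fun n => {z | R.rel (x n) z}) = Set.range (fun n => {z | R.rel (y n) z})

/-- The iterated Γ-jumps of `E`: `J^0 = E`, `J^{α+1} = (J^α)^{[Γ]}`, and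
`J^λ = (⊕_{α<λ} J^α)^{[Γ]}` for limit `λ`. -/
noncomputable def iterJump (Γ : Type) [Group Γ] (E : BorelEqvRel) (o : Ordinal) :
    BorelEqvRel :=
  Ordinal.limitRecOn o E (fun _ ih => jumpB Γ ih)
    (fun o _ ih => jumpB Γ (sumB (fun i : {β : Ordinal // β < o} => ih i.1 i.2)))

/-- `Δ(2)`: the identity relation on a two-element set. -/
def deltaTwo : BorelEqvRel := ⟨ULift Bool, ⊤, Eq⟩

/-- The Friedman–Stanley tower: `F_0 = Δ(ω)`, `F_{α+1} = (F_α)⁺`, and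
`F_λ = (⊕_{α<λ} F_α)⁺` for limit `λ`. -/
noncomputable def FStower (o : Ordinal) : BorelEqvRel :=
  Ordinal.limitRecOn o ⟨ULift ℕ, ⊤, Eq⟩ (fun _ ih => fsJumpB ih)
    (fun o _ ih => fsJumpB (sumB (fun i : {β : Ordinal // β < o} => ih i.1 i.2)))

noncomputable section
namespace CC

open Set Topology MeasureTheory

/-- Discrete "column" space: the alphabet of our Cohen-style product space. -/
def Col : Type 1 := ℕ → ULift.{1} ℕ

instance : TopologicalSpace Col := ⊥
instance : DiscreteTopology Col := ⟨rfl⟩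
instance : Nonempty Col := ⟨fun _ => ⟨0⟩⟩
instance : Inhabited Col := ⟨fun _ => ⟨0⟩⟩

/-- The product-of-discrete space over index `I`. -/
abbrev WSp (I : Type) : Type 1 := I → Col

/-- Basic cylinder: functions agreeing with `g` on the finite set `s`. -/
def Cyl {I : Type} (s : Finset I) (g : WSp I) : Set (WSp I) := {w | ∀ i ∈ s, w i = g i}

lemma self_mem_cyl {I : Type} (s : Finset I) (g : WSp I) : g ∈ Cyl s g := fun _ _ => rfl

lemma isOpen_cyl {I : Type} (s : Finset I) (g : WSp I) : IsOpen (Cyl s g) := by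
  have : Cyl s g = ⋂ i ∈ s, (fun w : WSp I => w i) ⁻¹' {g i} := by
    ext w; simp [Cyl]
  rw [this]
  exact isOpen_biInter_finset fun i _ =>
    (continuous_apply i).isOpen_preimage _ (isOpen_discrete _)

lemma cyl_subset_of_isOpen {I : Type} {U : Set (WSp I)} (hU : IsOpen U) {x : WSp I}
    (hx : x ∈ U) : ∃ s : Finset I, Cyl s x ⊆ U := by
  obtain ⟨t, u, h1, h2⟩ := isOpen_pi_iff.mp hU x hx
  refine ⟨t, fun w hw => h2 ?_⟩
  intro i hi
  rw [hw i hi]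
  exact (h1 i hi).2

/-- One-step extension into a dense open set. -/
lemma extend_into {I : Type} (s : Finset I) (g : WSp I) {G : Set (WSp I)}
    (hGo : IsOpen G) (hGd : Dense G) :
    ∃ q : Finset I × WSp I, s ⊆ q.1 ∧ (∀ i ∈ s, q.2 i = g i) ∧ Cyl q.1 q.2 ⊆ G := by
  classical
  obtain ⟨y, hyG, hy⟩ := hGd.exists_mem_open (isOpen_cyl s g) ⟨g, self_mem_cyl s g⟩
  obtain ⟨t, ht⟩ := cyl_subset_of_isOpen hGo hyG
  refine ⟨⟨s ∪ t, y⟩, Finset.subset_union_left, fun i hi => hy i hi, fun w hw => ht ?_⟩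
  intro i hi
  exact hw i (Finset.mem_union_right _ hi)

instance baireWSp (I : Type) : BaireSpace (WSp I) := by
  constructor
  intro G hGo hGd
  rw [dense_iff_inter_open]
  rintro U hUo ⟨x, hx⟩
  obtain ⟨s₀, hs₀⟩ := cyl_subset_of_isOpen hUo hx
  have key : ∀ (p : Finset I × WSp I) (n : ℕ), ∃ q : Finset I × WSp I,
      p.1 ⊆ q.1 ∧ (∀ i ∈ p.1, q.2 i = p.2 i) ∧ Cyl q.1 q.2 ⊆ G n :=
    fun p n => extend_into p.1 p.2 (hGo n) (hGd n)
  choose F hF1 hF2 hF3 using key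
  set seq : ℕ → Finset I × WSp I := fun n => Nat.rec (s₀, x) (fun n p => F p n) n with hseq
  have hss : ∀ n, seq (n + 1) = F (seq n) n := fun n => rfl
  have mono : ∀ k l, k ≤ l → (seq k).1 ⊆ (seq l).1 := by
    intro k l hkl
    induction l with
    | zero =>
      have : k = 0 := by omega
      subst this; exact subset_rfl
    | succ l ih =>
      rcases Nat.lt_or_ge k (l+1) with h | h
      · exact (ih (by omega)).trans (by rw [hss]; exact hF1 _ _)
      · have : k = l + 1 := by omega
        subst this; exact subset_rfl
  have agree : ∀ k l, k ≤ l → ∀ i ∈ (seq k).1, (seq l).2 i = (seq k).2 i := by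
    intro k l hkl
    induction l with
    | zero =>
      have : k = 0 := by omega
      subst this; intro i _; rfl
    | succ l ih =>
      rcases Nat.lt_or_ge k (l+1) with h | h
      · intro i hi
        have h1 : (seq (l+1)).2 i = (seq l).2 i := by
          rw [hss]; exact hF2 _ _ i (mono k l (by omega) hi)
        rw [h1, ih (by omega) i hi]
      · have : k = l + 1 := by omega
        subst this; intro i _; rfl
  classical
  set w : WSp I := fun i => if h : ∃ k, i ∈ (seq k).1 then (seq (Nat.find h)).2 i else x i
    with hw
  have hwmem : ∀ k, w ∈ Cyl (seq k).1 (seq k).2 := by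
    intro k i hi
    have h : ∃ k, i ∈ (seq k).1 := ⟨k, hi⟩
    have hle : Nat.find h ≤ k := Nat.find_min' h hi
    have hfind : i ∈ (seq (Nat.find h)).1 := Nat.find_spec h
    have : (seq k).2 i = (seq (Nat.find h)).2 i := agree _ _ hle i hfind
    simp only [hw, dif_pos h]
    rw [this]
  refine ⟨w, ?_, ?_⟩
  · apply hs₀
    exact hwmem 0
  · rw [mem_iInter]
    intro n
    exact hF3 (seq n) n (by rw [← hss]; exact hwmem (n+1))

section proj

variable {I K : Type}

/-- Reindexing projection. -/
def prj (j : I → K) : WSp K → WSp I := fun v => v ∘ j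

lemma continuous_prj (j : I → K) : Continuous (prj j) :=
  continuous_pi fun i => continuous_apply (j i)

lemma surjective_prj {j : I → K} (hj : Function.Injective j) :
    Function.Surjective (prj j) := by
  classical
  intro u
  refine ⟨fun k => if h : ∃ i, j i = k then u h.choose else default, ?_⟩
  funext i
  have h : ∃ i', j i' = j i := ⟨i, rfl⟩
  have : h.choose = i := hj h.choose_spec
  simp only [prj, Function.comp_apply, dif_pos h, this]

lemma isOpenMap_prj {j : I → K} (hj : Function.Injective j) : IsOpenMap (prj j) := by
  classical
  intro U hU
  rw [isOpen_iff_forall_mem_open]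
  rintro u ⟨v, hvU, rfl⟩
  obtain ⟨s, hs⟩ := cyl_subset_of_isOpen hU hvU
  refine ⟨Cyl (s.preimage j hj.injOn) (prj j v), ?_, isOpen_cyl _ _, self_mem_cyl _ _⟩
  intro u' hu'
  refine ⟨fun k => if h : ∃ i, j i = k then u' h.choose else v k, hs ?_, ?_⟩
  · intro k hk
    by_cases h : ∃ i, j i = k
    · simp only [dif_pos h]
      have hmem : h.choose ∈ s.preimage j hj.injOn := by
        rw [Finset.mem_preimage, h.choose_spec]; exact hk
      have := hu' h.choose hmem
      rw [this]
      simp only [prj, Function.comp_apply, h.choose_spec]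
    · simp only [dif_neg h]
  · funext i
    have h : ∃ i', j i' = j i := ⟨i, rfl⟩
    have hch : h.choose = i := hj h.choose_spec
    simp only [prj, Function.comp_apply, dif_pos h, hch]

lemma isMeagre_preimage_prj {j : I → K} (hj : Function.Injective j) {S : Set (WSp I)}
    (hS : IsMeagre S) : IsMeagre (prj j ⁻¹' S) :=
  hS.preimage_of_isOpenMap (continuous_prj j) (isOpenMap_prj hj)

lemma baireMeasurable_preimage_prj {j : I → K} (hj : Function.Injective j) {S : Set (WSp I)}
    (hS : BaireMeasurableSet S) : BaireMeasurableSet (prj j ⁻¹' S) :=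
  hS.preimage (continuous_prj j) (isOpenMap_prj hj)

end proj

section box

variable {I I' : Type}

/-- Box: product of two opens inside the sum-indexed space. -/
def Bx (U : Set (WSp I)) (U' : Set (WSp I')) : Set (WSp (I ⊕ I')) :=
  prj Sum.inl ⁻¹' U ∩ prj Sum.inr ⁻¹' U'

lemma isOpen_Bx {U : Set (WSp I)} {U' : Set (WSp I')} (h : IsOpen U) (h' : IsOpen U') :
    IsOpen (Bx U U') :=
  ((h.preimage (continuous_prj _))).inter (h'.preimage (continuous_prj _))

lemma nonempty_Bx {U : Set (WSp I)} {U' : Set (WSp I')} (h : U.Nonempty) (h' : U'.Nonempty) :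
    (Bx U U').Nonempty := by
  obtain ⟨x, hx⟩ := h
  obtain ⟨y, hy⟩ := h'
  exact ⟨Sum.elim x y, hx, hy⟩

/-- any cylinder in the sum space is a box of cylinders -/
lemma cyl_eq_Bx (s : Finset (I ⊕ I')) (g : WSp (I ⊕ I')) :
    Cyl s g = Bx (Cyl (s.preimage Sum.inl Sum.inl_injective.injOn) (prj Sum.inl g))
      (Cyl (s.preimage Sum.inr Sum.inr_injective.injOn) (prj Sum.inr g)) := by
  ext v
  constructor
  · intro hv
    constructor
    · intro i hi
      exact hv _ (Finset.mem_preimage.mp hi)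
    · intro i hi
      exact hv _ (Finset.mem_preimage.mp hi)
  · rintro ⟨h1, h2⟩ k hk
    cases k with
    | inl i => exact h1 i (Finset.mem_preimage.mpr hk)
    | inr i => exact h2 i (Finset.mem_preimage.mpr hk)

end box

section cmg

variable {X : Type*} [TopologicalSpace X]

/-- `A` is comeager within `U`. -/
def CmgIn (U A : Set X) : Prop := IsMeagre (U \ A)

lemma CmgIn.inter {U A B : Set X} (hA : CmgIn U A) (hB : CmgIn U B) : CmgIn U (A ∩ B) := by
  have : U \ (A ∩ B) = (U \ A) ∪ (U \ B) := by
    ext x; simp only [mem_diff, mem_inter_iff, mem_union]; tauto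
  rw [CmgIn, this, IsMeagre, compl_union]
  exact Filter.inter_mem hA hB

lemma CmgIn.iInter {ι : Sort*} [Countable ι] {U : Set X} {A : ι → Set X}
    (h : ∀ i, CmgIn U (A i)) : CmgIn U (⋂ i, A i) := by
  have : U \ (⋂ i, A i) = ⋃ i, U \ A i := by
    ext x
    simp only [mem_diff, mem_iInter, mem_iUnion]
    constructor
    · rintro ⟨hxU, hni⟩
      push_neg at hni
      obtain ⟨i, hi⟩ := hni
      exact ⟨i, hxU, hi⟩
    · rintro ⟨i, hxU, hni⟩
      exact ⟨hxU, fun hall => hni (hall i)⟩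
  rw [CmgIn, this, IsMeagre, compl_iUnion]
  exact countable_iInter_mem.mpr h

lemma CmgIn.mono_left {U V A : Set X} (h : CmgIn U A) (hVU : V ⊆ U) : CmgIn V A :=
  h.mono (diff_subset_diff_left hVU)

lemma CmgIn.mono_right {U A B : Set X} (h : CmgIn U A) (hAB : A ⊆ B) : CmgIn U B :=
  h.mono (diff_subset_diff_right hAB)

lemma CmgIn.nonempty [BaireSpace X] {U A : Set X} (hU : IsOpen U) (hne : U.Nonempty)
    (h : CmgIn U A) : (U ∩ A).Nonempty := by
  by_contra hc
  rw [not_nonempty_iff_eq_empty] at hc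
  have hUA : U ⊆ U \ A := fun x hx =>
    ⟨hx, fun hxA => by rw [← mem_empty_iff_false x, ← hc]; exact ⟨hx, hxA⟩⟩
  have hm : IsMeagre U := h.mono hUA
  obtain ⟨x, hx1, hx2⟩ := dense_iff_inter_open.mp (dense_of_mem_residual hm) U hU hne
  exact hx2 hx1

lemma symmdiff_meagre_of_eventuallyEq {A u : Set X} (h : A =ᵇ u) :
    IsMeagre (A \ u) ∧ IsMeagre (u \ A) := by
  have hE : {x | x ∈ A ↔ x ∈ u} ∈ residual X := by
    have := Filter.eventuallyEq_set.mp h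
    exact this
  constructor
  · rw [IsMeagre]
    refine Filter.mem_of_superset hE ?_
    intro x hx hxd
    rw [mem_diff] at hxd
    exact hxd.2 (hx.mp hxd.1)
  · rw [IsMeagre]
    refine Filter.mem_of_superset hE ?_
    intro x hx hxd
    rw [mem_diff] at hxd
    exact hxd.2 (hx.mpr hxd.1)

/-- Localization: a non-meager Baire-measurable set is comeager in some nonempty open. -/
lemma exists_isOpen_cmgIn {A U : Set X} (hA : BaireMeasurableSet A) (hU : IsOpen U)
    (h : ¬ IsMeagre (A ∩ U)) :
    ∃ V : Set X, IsOpen V ∧ V.Nonempty ∧ V ⊆ U ∧ CmgIn V A := by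
  obtain ⟨u, huo, hres⟩ := hA.residualEq_isOpen
  obtain ⟨h1, h2⟩ := symmdiff_meagre_of_eventuallyEq hres
  refine ⟨u ∩ U, huo.inter hU, ?_, inter_subset_right, ?_⟩
  · by_contra hc
    rw [not_nonempty_iff_eq_empty] at hc
    apply h
    have : A ∩ U ⊆ A \ u := by
      intro x hx
      refine ⟨hx.1, fun hxu => ?_⟩
      rw [← mem_empty_iff_false x, ← hc]
      exact ⟨hxu, hx.2⟩
    exact h1.mono this
  · refine h2.mono ?_
    exact fun x hx => ⟨hx.1.1, hx.2⟩

end cmg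

lemma CmgIn.pullback {I K : Type} {j : I → K} (hj : Function.Injective j)
    {U A : Set (WSp I)} (h : CmgIn U A) {B : Set (WSp K)} (hB : B ⊆ prj j ⁻¹' U) :
    CmgIn B (prj j ⁻¹' A) :=
  by refine (isMeagre_preimage_prj hj h).mono ?_; exact fun v hv => ⟨hB hv.1, hv.2⟩

section BPlayer

/-- The σ-algebra of sets with the Baire property. -/
def BPσ (X : Type*) [TopologicalSpace X] : MeasurableSpace X :=
  eventuallyMeasurableSpace (borel X) (residual X)

lemma bpσ_iff {X : Type*} [TopologicalSpace X] {S : Set X} :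
    MeasurableSet[BPσ X] S ↔ BaireMeasurableSet S := Iff.rfl

/-- `H` is Baire-measurable w.r.t. target σ-algebra `m`. -/
abbrev BPM {I : Type} {C : Type 1} (m : MeasurableSpace C) (H : WSp I → C) : Prop :=
  @Measurable _ _ (BPσ (WSp I)) m H

lemma BPM.bp {I : Type} {C : Type 1} {m : MeasurableSpace C} {H : WSp I → C}
    (h : BPM m H) {S : Set C} (hS : MeasurableSet[m] S) : BaireMeasurableSet (H ⁻¹' S) :=
  h hS

lemma BPM.comp {I : Type} {C C' : Type 1} {m : MeasurableSpace C} {m' : MeasurableSpace C'}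
    {φ : C → C'} (hφ : @Measurable _ _ m m' φ) {H : WSp I → C} (h : BPM m H) :
    BPM m' (fun w => φ (H w)) := hφ.comp h

lemma measurable_prj_bp {I K : Type} {j : I → K} (hj : Function.Injective j) :
    @Measurable _ _ (BPσ (WSp K)) (BPσ (WSp I)) (prj j) :=
  fun _ hS => baireMeasurable_preimage_prj hj hS

lemma BPM.precomp_prj {I K : Type} {C : Type 1} {m : MeasurableSpace C} {H : WSp I → C}
    (h : BPM m H) {j : I → K} (hj : Function.Injective j) :
    BPM m (fun v => H (prj j v)) :=
  fun _ hS => baireMeasurable_preimage_prj hj (h hS)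

lemma BPM.pair {I I' : Type} {C : Type 1} {m : MeasurableSpace C}
    {H : WSp I → C} {H' : WSp I' → C} (hH : BPM m H) (hH' : BPM m H') :
    @Measurable _ _ (BPσ (WSp (I ⊕ I'))) (m.prod m)
      (fun v => (H (prj Sum.inl v), H' (prj Sum.inr v))) :=
  @Measurable.prodMk _ _ _ _ (m) (m) _ _
    (hH.precomp_prj Sum.inl_injective) (hH'.precomp_prj Sum.inr_injective)

lemma not_isMeagre_open {X : Type*} [TopologicalSpace X] [BaireSpace X] {U : Set X}
    (hU : IsOpen U) (h : U.Nonempty) : ¬ IsMeagre U := by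
  intro hm
  have : CmgIn U (∅ : Set X) := by
    rw [CmgIn, diff_empty]; exact hm
  obtain ⟨x, -, hx⟩ := this.nonempty hU h
  exact hx

lemma isMeagre_iUnion' {X : Type*} [TopologicalSpace X] {ι : Sort*} [Countable ι]
    {A : ι → Set X} (h : ∀ i, IsMeagre (A i)) : IsMeagre (⋃ i, A i) := by
  rw [IsMeagre, compl_iUnion]
  exact countable_iInter_mem.mpr h

end BPlayer

section Tame

/-- The key "category-pinnedness" package carried through the jump hierarchy. -/
structure Tame (R : BorelEqvRel) : Prop where
  refl : ∀ x, R.rel x x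
  symm : ∀ {x y}, R.rel x y → R.rel y x
  trans : ∀ {x y z}, R.rel x y → R.rel y z → R.rel x z
  ne : Nonempty R.carrier
  meas : MeasurableSet[R.ms.prod R.ms] {p : R.carrier × R.carrier | R.rel p.1 p.2}
  pinned : ∀ (I I' : Type) (H : WSp I → R.carrier) (H' : WSp I' → R.carrier),
    BPM R.ms H → BPM R.ms H' → ∀ (U : Set (WSp I)) (U' : Set (WSp I')),
    IsOpen U → U.Nonempty → IsOpen U' → U'.Nonempty →
    CmgIn (Bx U U') {v | R.rel (H (prj Sum.inl v)) (H' (prj Sum.inr v))} →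
    ∃ y : R.carrier, CmgIn U {w | R.rel (H w) y}

variable {R : BorelEqvRel}

lemma Tame.classMeas (hT : Tame R) (y₀ : R.carrier) :
    MeasurableSet[R.ms] {y | R.rel y y₀} := by
  have hm : @Measurable _ _ R.ms (R.ms.prod R.ms) (fun y => (y, y₀)) :=
    @Measurable.prodMk _ _ _ _ R.ms R.ms _ _ measurable_id measurable_const
  exact hm hT.meas

lemma Tame.crossBP (hT : Tame R) {I I' : Type} {H : WSp I → R.carrier}
    {H' : WSp I' → R.carrier} (hH : BPM R.ms H) (hH' : BPM R.ms H') :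
    BaireMeasurableSet {v : WSp (I ⊕ I') | R.rel (H (prj Sum.inl v)) (H' (prj Sum.inr v))} :=
  (hH.pair hH') hT.meas

/-- invariant countable values are generically constant, with matching values on both sides. -/
lemma unique_value {κ : Type*} [Countable κ] (φ : R.carrier → κ)
    (hinv : ∀ {x y}, R.rel x y → φ x = φ y)
    (hφ : ∀ c, MeasurableSet[R.ms] {y | φ y = c})
    {I I' : Type} {H : WSp I → R.carrier} {H' : WSp I' → R.carrier}
    (hH : BPM R.ms H) (hH' : BPM R.ms H')
    {U : Set (WSp I)} {U' : Set (WSp I')}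
    (hUo : IsOpen U) (hUne : U.Nonempty) (hU'o : IsOpen U') (hU'ne : U'.Nonempty)
    (hcross : CmgIn (Bx U U') {v | R.rel (H (prj Sum.inl v)) (H' (prj Sum.inr v))}) :
    ∃ c, CmgIn U {w | φ (H w) = c} ∧ CmgIn U' {w | φ (H' w) = c} := by
  classical
  set A : κ → Set (WSp I) := fun c => H ⁻¹' {y | φ y = c} with hA
  set A' : κ → Set (WSp I') := fun c => H' ⁻¹' {y | φ y = c} with hA'
  have hAbp : ∀ c, BaireMeasurableSet (A c) := fun c => hH.bp (hφ c)
  have hA'bp : ∀ c, BaireMeasurableSet (A' c) := fun c => hH'.bp (hφ c)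
  -- matching values across the box
  have match_ : ∀ c c', ¬ IsMeagre (A c ∩ U) → ¬ IsMeagre (A' c' ∩ U') → c = c' := by
    intro c c' hc hc'
    obtain ⟨V, hVo, hVne, hVU, hVc⟩ := exists_isOpen_cmgIn (hAbp c) hUo hc
    obtain ⟨V', hV'o, hV'ne, hV'U, hV'c⟩ := exists_isOpen_cmgIn (hA'bp c') hU'o hc'
    have h1 : CmgIn (Bx V V') (prj Sum.inl ⁻¹' A c) :=
      hVc.pullback Sum.inl_injective inter_subset_left
    have h2 : CmgIn (Bx V V') (prj Sum.inr ⁻¹' A' c') :=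
      hV'c.pullback Sum.inr_injective inter_subset_right
    have h3 : CmgIn (Bx V V') {v | R.rel (H (prj Sum.inl v)) (H' (prj Sum.inr v))} :=
      hcross.mono_left (fun v hv => ⟨hVU hv.1, hV'U hv.2⟩)
    obtain ⟨v, -, hv⟩ := ((h1.inter h2).inter h3).nonempty
      (isOpen_Bx hVo hV'o) (nonempty_Bx hVne hV'ne)
    obtain ⟨⟨hv1, hv2⟩, hv3⟩ := hv
    have e1 : φ (H (prj Sum.inl v)) = c := hv1
    have e2 : φ (H' (prj Sum.inr v)) = c' := hv2
    rw [← e1, ← e2, hinv hv3]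
  -- existence of a non-meager value on the U side
  have exU : ∃ c, ¬ IsMeagre (A c ∩ U) := by
    by_contra hno
    push_neg at hno
    apply not_isMeagre_open hUo hUne
    have : U ⊆ ⋃ c, A c ∩ U := fun w hw => mem_iUnion.mpr ⟨φ (H w), rfl, hw⟩
    exact (isMeagre_iUnion' hno).mono this
  have exU' : ∃ c, ¬ IsMeagre (A' c ∩ U') := by
    by_contra hno
    push_neg at hno
    apply not_isMeagre_open hU'o hU'ne
    have : U' ⊆ ⋃ c, A' c ∩ U' := fun w hw => mem_iUnion.mpr ⟨φ (H' w), rfl, hw⟩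
    exact (isMeagre_iUnion' hno).mono this
  obtain ⟨c, hc⟩ := exU
  obtain ⟨c', hc'⟩ := exU'
  obtain rfl : c = c' := match_ c c' hc hc'
  refine ⟨c, ?_, ?_⟩
  · have : U \ A c ⊆ ⋃ d : κ, if d = c then ∅ else A d ∩ U := by
      intro w hw
      refine mem_iUnion.mpr ⟨φ (H w), ?_⟩
      have hne : φ (H w) ≠ c := fun he => hw.2 he
      rw [if_neg hne]
      exact ⟨rfl, hw.1⟩
    refine IsMeagre.mono this (isMeagre_iUnion' fun d => ?_)
    by_cases hd : d = c
    · rw [if_pos hd]; exact IsMeagre.empty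
    · rw [if_neg hd]
      by_contra hm
      exact hd (match_ d c hm hc')
  · have : U' \ A' c ⊆ ⋃ d : κ, if d = c then ∅ else A' d ∩ U' := by
      intro w hw
      refine mem_iUnion.mpr ⟨φ (H' w), ?_⟩
      have hne : φ (H' w) ≠ c := fun he => hw.2 he
      rw [if_neg hne]
      exact ⟨rfl, hw.1⟩
    refine IsMeagre.mono this (isMeagre_iUnion' fun d => ?_)
    by_cases hd : d = c
    · rw [if_pos hd]; exact IsMeagre.empty
    · rw [if_neg hd]
      by_contra hm
      exact hd ((match_ c d hc hm).symm)

end Tame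

section Coherence

lemma isMeagre_union {X : Type*} [TopologicalSpace X] {A B : Set X}
    (hA : IsMeagre A) (hB : IsMeagre B) : IsMeagre (A ∪ B) := by
  rw [IsMeagre, Set.compl_union]
  exact Filter.inter_mem hA hB

/-- Mutual genericity / coherence: two local generic values are related. -/
lemma coherence {C : Type 1} {rel : C → C → Prop}
    (hsymm : ∀ {x y}, rel x y → rel y x)
    (htrans : ∀ {x y z}, rel x y → rel y z → rel x z)
    {I I' : Type} {H : WSp I → C} {H' : WSp I' → C}
    {U : Set (WSp I)} {U' : Set (WSp I')} (hU'o : IsOpen U') (hU'ne : U'.Nonempty)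
    (hP : CmgIn (Bx U U') {v | rel (H (prj Sum.inl v)) (H' (prj Sum.inr v))})
    {C₁ C₂ : Set (WSp I)} (hC₁o : IsOpen C₁) (hC₁ne : C₁.Nonempty) (hC₁U : C₁ ⊆ U)
    (hC₂o : IsOpen C₂) (hC₂ne : C₂.Nonempty) (hC₂U : C₂ ⊆ U)
    {y₁ y₂ : C}
    (h₁ : CmgIn C₁ {w | rel (H w) y₁}) (h₂ : CmgIn C₂ {w | rel (H w) y₂}) :
    rel y₁ y₂ := by
  classical
  set K := I ⊕ (I ⊕ I') with hK
  have hc1i : Function.Injective (Sum.inl : I → K) := Sum.inl_injective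
  have hc2i : Function.Injective (fun i : I => (Sum.inr (Sum.inl i) : K)) := fun a b h => by
    simpa using h
  have hc3i : Function.Injective (fun i : I' => (Sum.inr (Sum.inr i) : K)) := fun a b h => by
    simpa using h
  have he13i : Function.Injective
      (Sum.elim (fun i : I => (Sum.inl i : K)) (fun i : I' => Sum.inr (Sum.inr i))) := by
    rintro (a | a) (b | b) h <;> simp_all
  have he23i : Function.Injective
      (Sum.elim (fun i : I => (Sum.inr (Sum.inl i) : K)) (fun i : I' => Sum.inr (Sum.inr i))) := by
    rintro (a | a) (b | b) h <;> simp_all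
  set Q : Set (WSp K) :=
    (prj Sum.inl ⁻¹' C₁ ∩ prj (fun i : I => (Sum.inr (Sum.inl i) : K)) ⁻¹' C₂) ∩
      prj (fun i : I' => (Sum.inr (Sum.inr i) : K)) ⁻¹' U' with hQdef
  have hQo : IsOpen Q :=
    ((hC₁o.preimage (continuous_prj _)).inter (hC₂o.preimage (continuous_prj _))).inter
      (hU'o.preimage (continuous_prj _))
  have hQne : Q.Nonempty := by
    obtain ⟨x₁, hx₁⟩ := hC₁ne
    obtain ⟨x₂, hx₂⟩ := hC₂ne
    obtain ⟨x₃, hx₃⟩ := hU'ne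
    exact ⟨Sum.elim x₁ (Sum.elim x₂ x₃), ⟨hx₁, hx₂⟩, hx₃⟩
  -- the four comeager-in-Q sets
  have m1 : CmgIn Q (prj (Sum.inl : I → K) ⁻¹' {w | rel (H w) y₁}) :=
    h₁.pullback hc1i (fun v hv => hv.1.1)
  have m2 : CmgIn Q (prj (fun i : I => (Sum.inr (Sum.inl i) : K)) ⁻¹' {w | rel (H w) y₂}) :=
    h₂.pullback hc2i (fun v hv => hv.1.2)
  have m3 : CmgIn Q (prj (Sum.elim (fun i : I => (Sum.inl i : K))
      (fun i : I' => Sum.inr (Sum.inr i))) ⁻¹'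
        {v | rel (H (prj Sum.inl v)) (H' (prj Sum.inr v))}) :=
    hP.pullback he13i (fun v hv => ⟨hC₁U hv.1.1, hv.2⟩)
  have m4 : CmgIn Q (prj (Sum.elim (fun i : I => (Sum.inr (Sum.inl i) : K))
      (fun i : I' => Sum.inr (Sum.inr i))) ⁻¹'
        {v | rel (H (prj Sum.inl v)) (H' (prj Sum.inr v))}) :=
    hP.pullback he23i (fun v hv => ⟨hC₂U hv.1.2, hv.2⟩)
  obtain ⟨v, -, hv⟩ := (((m1.inter m2).inter m3).inter m4).nonempty hQo hQne
  obtain ⟨⟨⟨hv1, hv2⟩, hv3⟩, hv4⟩ := hv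
  exact htrans (hsymm hv1) (htrans hv3 (htrans (hsymm hv4) hv2))

end Coherence

section Jump

variable (Γ : Type) [Group Γ] [Countable Γ] {R : BorelEqvRel}

lemma gj_refl (hT : Tame R) (x : Γ → R.carrier) : GammaJump Γ R.rel x x := by
  refine ⟨1, fun a => ?_⟩
  rw [inv_one, one_mul]
  exact hT.refl _

lemma gj_symm (hT : Tame R) {x y : Γ → R.carrier} (h : GammaJump Γ R.rel x y) :
    GammaJump Γ R.rel y x := by
  obtain ⟨γ, h⟩ := h
  refine ⟨γ⁻¹, fun a => ?_⟩
  rw [inv_inv]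
  have := hT.symm (h (γ * a))
  rwa [inv_mul_cancel_left] at this

lemma gj_trans (hT : Tame R) {x y z : Γ → R.carrier} (h1 : GammaJump Γ R.rel x y)
    (h2 : GammaJump Γ R.rel y z) : GammaJump Γ R.rel x z := by
  obtain ⟨γ, h1⟩ := h1
  obtain ⟨δ, h2⟩ := h2
  refine ⟨δ * γ, fun a => ?_⟩
  have e1 := h1 (δ⁻¹ * a)
  have e2 := h2 a
  rw [mul_inv_rev, mul_assoc]
  exact hT.trans e1 e2

lemma jump_meas (hT : Tame R) :
    MeasurableSet[(jumpB Γ R).ms.prod (jumpB Γ R).ms]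
      {p : (jumpB Γ R).carrier × (jumpB Γ R).carrier | (jumpB Γ R).rel p.1 p.2} := by
  letI : MeasurableSpace R.carrier := R.ms
  have he : {p : (Γ → R.carrier) × (Γ → R.carrier) | GammaJump Γ R.rel p.1 p.2} =
      ⋃ γ : Γ, ⋂ a : Γ,
        (fun p : (Γ → R.carrier) × (Γ → R.carrier) => (p.1 (γ⁻¹ * a), p.2 a)) ⁻¹'
          {q : R.carrier × R.carrier | R.rel q.1 q.2} := by
    ext p
    simp [GammaJump]
  show MeasurableSet[_] {p : (Γ → R.carrier) × (Γ → R.carrier) | GammaJump Γ R.rel p.1 p.2}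
  rw [he]
  refine MeasurableSet.iUnion fun γ => MeasurableSet.iInter fun a => ?_
  have hm : Measurable (fun p : (Γ → R.carrier) × (Γ → R.carrier) => (p.1 (γ⁻¹ * a), p.2 a)) :=
    ((measurable_pi_apply _).comp measurable_fst).prodMk
      ((measurable_pi_apply _).comp measurable_snd)
  exact hm hT.meas

lemma jump_classMeas (hT : Tame R) (y₀ : (jumpB Γ R).carrier) :
    MeasurableSet[(jumpB Γ R).ms] {y | (jumpB Γ R).rel y y₀} := by
  have hm : @Measurable _ _ (jumpB Γ R).ms ((jumpB Γ R).ms.prod (jumpB Γ R).ms)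
      (fun y => (y, y₀)) :=
    @Measurable.prodMk _ _ _ _ _ _ _ _ measurable_id measurable_const
  exact hm (jump_meas Γ hT)

theorem tame_jumpB (hT : Tame R) : Tame (jumpB Γ R) := by
  refine ⟨gj_refl Γ hT, gj_symm Γ hT, gj_trans Γ hT, ⟨fun _ => Classical.choice hT.ne⟩,
    jump_meas Γ hT, ?_⟩
  intro I I' H H' hH hH' U U' hUo hUne hU'o hU'ne hcross
  letI : MeasurableSpace R.carrier := R.ms
  have hHa : ∀ b : Γ, BPM R.ms (fun w => H w b) :=
    fun b => BPM.comp (measurable_pi_apply b) hH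
  have hH'a : ∀ b : Γ, BPM R.ms (fun w => H' w b) :=
    fun b => BPM.comp (measurable_pi_apply b) hH'
  set P : Set (WSp (I ⊕ I')) :=
    {v | (jumpB Γ R).rel (H (prj Sum.inl v)) (H' (prj Sum.inr v))} with hPdef
  set T : Γ → Set (WSp (I ⊕ I')) :=
    (fun γ => {v | ∀ a : Γ, R.rel (H (prj Sum.inl v) (γ⁻¹ * a)) (H' (prj Sum.inr v) a)})
    with hTdef
  have hPT : P ⊆ ⋃ γ, T γ := by
    intro v hv
    obtain ⟨γ, hγ⟩ := hv
    exact mem_iUnion.mpr ⟨γ, hγ⟩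
  have hTbp : ∀ γ, BaireMeasurableSet (T γ) := by
    intro γ
    have he : T γ = ⋂ a : Γ, {v : WSp (I ⊕ I') |
        R.rel ((fun w => H w (γ⁻¹ * a)) (prj Sum.inl v)) ((fun w => H' w a) (prj Sum.inr v))} := by
      ext v
      simp [hTdef]
    rw [he]
    exact .iInter fun a => hT.crossBP (hHa _) (hH'a _)
  -- STEP A: local solutions everywhere
  have stepA : ∀ V : Set (WSp I), IsOpen V → V.Nonempty → V ⊆ U →
      ∃ (C : Set (WSp I)) (y : Γ → R.carrier), IsOpen C ∧ C.Nonempty ∧ C ⊆ V ∧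
        CmgIn C {w | (jumpB Γ R).rel (H w) y} := by
    intro V hVo hVne hVU
    have hcV : CmgIn (Bx V U') P := hcross.mono_left (fun v hv => ⟨hVU hv.1, hv.2⟩)
    have hex : ∃ γ₀, ¬ IsMeagre (T γ₀ ∩ Bx V U') := by
      by_contra hno
      push_neg at hno
      apply not_isMeagre_open (isOpen_Bx hVo hU'o) (nonempty_Bx hVne hU'ne)
      have hsub : Bx V U' ⊆ (Bx V U' \ P) ∪ ⋃ γ, (T γ ∩ Bx V U') := by
        intro v hv
        by_cases hvP : v ∈ P
        · obtain ⟨γ, hγ⟩ := mem_iUnion.mp (hPT hvP)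
          exact Or.inr (mem_iUnion.mpr ⟨γ, hγ, hv⟩)
        · exact Or.inl ⟨hv, hvP⟩
      exact (isMeagre_union hcV (isMeagre_iUnion' hno)).mono hsub
    obtain ⟨γ₀, hγ₀⟩ := hex
    obtain ⟨O, hOo, hOne, hOsub, hOc⟩ :=
      exists_isOpen_cmgIn (hTbp γ₀) (isOpen_Bx hVo hU'o) hγ₀
    obtain ⟨x₀, hx₀⟩ := hOne
    obtain ⟨s, hs⟩ := cyl_subset_of_isOpen hOo hx₀
    set C := Cyl (s.preimage Sum.inl Sum.inl_injective.injOn) (prj Sum.inl x₀) with hCdef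
    set C' := Cyl (s.preimage Sum.inr Sum.inr_injective.injOn) (prj Sum.inr x₀) with hC'def
    have hbox : Bx C C' ⊆ O := by
      rw [hCdef, hC'def, ← cyl_eq_Bx]
      exact hs
    have hCne : C.Nonempty := ⟨_, self_mem_cyl _ _⟩
    have hC'ne : C'.Nonempty := ⟨_, self_mem_cyl _ _⟩
    have hCV : C ⊆ V := by
      intro w hw
      obtain ⟨w', hw'⟩ := hC'ne
      have hmem : Sum.elim w w' ∈ Bx C C' := ⟨hw, hw'⟩
      exact (hOsub (hbox hmem)).1
    have key : ∀ a : Γ, ∃ y, CmgIn C {w | R.rel ((fun w => H w (γ₀⁻¹ * a)) w) y} := by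
      intro a
      refine hT.pinned I I' (fun w => H w (γ₀⁻¹ * a)) (fun w => H' w a) (hHa _) (hH'a _)
        C C' (isOpen_cyl _ _) hCne (isOpen_cyl _ _) hC'ne ?_
      refine (hOc.mono_left hbox).mono_right ?_
      intro v hv
      exact hv a
    choose y hy using key
    refine ⟨C, y, isOpen_cyl _ _, hCne, hCV, ?_⟩
    refine (CmgIn.iInter (fun a : Γ => hy a)).mono_right ?_
    intro w hw
    exact ⟨γ₀, fun a => mem_iInter.mp hw a⟩
  -- STEP C: globalization
  obtain ⟨C₀, y₀, hC₀o, hC₀ne, hC₀U, hy₀⟩ := stepA U hUo hUne subset_rfl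
  refine ⟨y₀, ?_⟩
  by_contra hbad
  have hAgbp : BaireMeasurableSet {w : WSp I | (jumpB Γ R).rel (H w) y₀} :=
    hH.bp (jump_classMeas Γ hT y₀)
  have hnm : ¬ IsMeagre ({w : WSp I | (jumpB Γ R).rel (H w) y₀}ᶜ ∩ U) := by
    intro hm
    apply hbad
    have : U \ {w | (jumpB Γ R).rel (H w) y₀} =
        {w : WSp I | (jumpB Γ R).rel (H w) y₀}ᶜ ∩ U := by
      ext w
      simp [mem_diff, And.comm]
    rw [CmgIn, this]
    exact hm
  obtain ⟨Vm, hVmo, hVmne, hVmU, hVmc⟩ := exists_isOpen_cmgIn hAgbp.compl hUo hnm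
  obtain ⟨C', y', hC'o, hC'ne, hC'V, hy'⟩ := stepA Vm hVmo hVmne hVmU
  have hyy : (jumpB Γ R).rel y' y₀ :=
    coherence (rel := (jumpB Γ R).rel) (H := H) (H' := H')
      (fun h => gj_symm Γ hT h) (fun h1 h2 => gj_trans Γ hT h1 h2) hU'o hU'ne hcross
      hC'o hC'ne (hC'V.trans hVmU) hC₀o hC₀ne hC₀U hy' hy₀
  have h1 : CmgIn C' {w : WSp I | (jumpB Γ R).rel (H w) y₀} :=
    hy'.mono_right (fun w hw => gj_trans Γ hT hw hyy)
  have h2 : CmgIn C' {w : WSp I | (jumpB Γ R).rel (H w) y₀}ᶜ := hVmc.mono_left hC'V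
  obtain ⟨w, -, hw1, hw2⟩ := (h1.inter h2).nonempty hC'o hC'ne
  exact hw2 hw1

end Jump

section SumDelta

variable {ι : Type 1} {f : ι → BorelEqvRel}

open Classical in
/-- extract the `i`-component from a point of the sum, with a default junk value. -/
noncomputable def getC (f : ι → BorelEqvRel) (hne : ∀ i, Nonempty (f i).carrier) (i : ι)
    (a : Σ j, (f j).carrier) : (f i).carrier :=
  if h : a.1 = i then h ▸ a.2 else Classical.choice (hne i)

lemma getC_mk (hne : ∀ i, Nonempty (f i).carrier) (i : ι) (x : (f i).carrier) :
    getC f hne i ⟨i, x⟩ = x := by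
  simp [getC]

lemma sumB_rel_iff (hne : ∀ i, Nonempty (f i).carrier) (a b : Σ j, (f j).carrier) :
    (sumB f).rel a b ↔
      ∃ i, a.1 = i ∧ b.1 = i ∧ (f i).rel (getC f hne i a) (getC f hne i b) := by
  constructor
  · rintro ⟨i, x, y, hxy, rfl, rfl⟩
    exact ⟨i, rfl, rfl, by simpa [getC_mk] using hxy⟩
  · obtain ⟨a1, a2⟩ := a
    obtain ⟨b1, b2⟩ := b
    rintro ⟨i, h1, h2, h3⟩
    dsimp only at h1 h2
    subst h1
    subst h2
    refine ⟨_, a2, b2, ?_, rfl, rfl⟩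
    simpa [getC_mk] using h3

lemma sum_ms_iff {S : Set (Σ j, (f j).carrier)} :
    MeasurableSet[(sumB f).ms] S ↔ ∀ j, MeasurableSet[(f j).ms]
      ((@Sigma.mk ι (fun j => (f j).carrier) j) ⁻¹' S) := by
  letI : ∀ j, MeasurableSpace (f j).carrier := fun j => (f j).ms
  have h1 : (sumB f).ms =
      (⨅ j, MeasurableSpace.map (Sigma.mk j) ((f j).ms) :
        MeasurableSpace (Σ j, (f j).carrier)) := rfl
  show MeasurableSet[(⨅ j, MeasurableSpace.map (Sigma.mk j) ((f j).ms) :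
          MeasurableSpace (Σ j, (f j).carrier))] S ↔ _
  rw [MeasurableSpace.measurableSet_iInf]
  exact Iff.rfl

lemma sum_idx_meas (i : ι) :
    MeasurableSet[(sumB f).ms] {a : Σ j, (f j).carrier | a.1 = i} := by
  refine sum_ms_iff.mpr ?_
  intro j
  by_cases h : j = i
  · subst h
    have he : (@Sigma.mk ι (fun j => (f j).carrier) j) ⁻¹' {a : Σ j, (f j).carrier | a.1 = j} = univ := by
      ext x; simp
    exact (congrArg (fun T => MeasurableSet[(f j).ms] T) he).mpr (@MeasurableSet.univ _ ((f j).ms))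
  · have he : (@Sigma.mk ι (fun j => (f j).carrier) j) ⁻¹' {a : Σ j, (f j).carrier | a.1 = i} = ∅ := by
      ext x; simp [h]
    exact (congrArg (fun T => MeasurableSet[(f j).ms] T) he).mpr (@MeasurableSet.empty _ ((f j).ms))

lemma getC_meas (hne : ∀ i, Nonempty (f i).carrier) (i : ι) :
    @Measurable _ _ (sumB f).ms (f i).ms (getC f hne i) := by
  intro S hS
  refine sum_ms_iff.mpr ?_
  intro j
  by_cases h : j = i
  · subst h
    have he : (@Sigma.mk ι (fun j => (f j).carrier) j) ⁻¹' (getC f hne j ⁻¹' S) = S := by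
      ext x; simp [getC_mk]
    exact (congrArg (fun T => MeasurableSet[(f j).ms] T) he).mpr (hS)
  · by_cases hd : Classical.choice (hne i) ∈ S
    · have he : (@Sigma.mk ι (fun j => (f j).carrier) j) ⁻¹' (getC f hne i ⁻¹' S) = univ := by
        ext x; simp [getC, h, hd]
      exact (congrArg (fun T => MeasurableSet[(f j).ms] T) he).mpr (@MeasurableSet.univ _ ((f j).ms))
    · have he : (@Sigma.mk ι (fun j => (f j).carrier) j) ⁻¹' (getC f hne i ⁻¹' S) = ∅ := by
        ext x; simp [getC, h, hd]
      exact (congrArg (fun T => MeasurableSet[(f j).ms] T) he).mpr (@MeasurableSet.empty _ ((f j).ms))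

lemma sum_meas [Countable ι] (hT : ∀ i, Tame (f i)) :
    MeasurableSet[(sumB f).ms.prod (sumB f).ms]
      {p : (sumB f).carrier × (sumB f).carrier | (sumB f).rel p.1 p.2} := by
  have hne : ∀ i, Nonempty (f i).carrier := fun i => (hT i).ne
  letI : ∀ j, MeasurableSpace (f j).carrier := fun j => (f j).ms
  letI : MeasurableSpace (sumB f).carrier := (sumB f).ms
  have he : {p : (sumB f).carrier × (sumB f).carrier | (sumB f).rel p.1 p.2} =
      ⋃ i : ι, (Prod.fst ⁻¹' {a : Σ j, (f j).carrier | a.1 = i}) ∩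
        (Prod.snd ⁻¹' {a : Σ j, (f j).carrier | a.1 = i}) ∩
        ((fun p : (sumB f).carrier × (sumB f).carrier =>
            (getC f hne i p.1, getC f hne i p.2)) ⁻¹'
          {q : (f i).carrier × (f i).carrier | (f i).rel q.1 q.2}) := by
    ext p
    simp only [mem_setOf_eq, mem_iUnion, mem_inter_iff, mem_preimage]
    refine (sumB_rel_iff hne p.1 p.2).trans ?_
    exact ⟨fun ⟨i, h1, h2, h3⟩ => mem_iUnion.mpr ⟨i, ⟨h1, h2⟩, h3⟩,
      fun h => let ⟨i, ⟨h1, h2⟩, h3⟩ := mem_iUnion.mp h; ⟨i, h1, h2, h3⟩⟩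
  show MeasurableSet {p : (sumB f).carrier × (sumB f).carrier | (sumB f).rel p.1 p.2}
  rw [he]
  refine MeasurableSet.iUnion fun i => ?_
  refine MeasurableSet.inter (MeasurableSet.inter ?_ ?_) ?_
  · exact measurable_fst (sum_idx_meas i)
  · exact measurable_snd (sum_idx_meas i)
  · refine Measurable.prodMk ?_ ?_ ((hT i).meas)
    · exact (getC_meas hne i).comp measurable_fst
    · exact (getC_meas hne i).comp measurable_snd

theorem tame_sumB [Countable ι] [Nonempty ι] (hT : ∀ i, Tame (f i)) : Tame (sumB f) := by
  have hne : ∀ i, Nonempty (f i).carrier := fun i => (hT i).ne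
  refine ⟨?_, ?_, ?_, ?_, sum_meas hT, ?_⟩
  · intro a
    exact ⟨a.1, a.2, a.2, (hT a.1).refl _, (Sigma.eta a).symm, (Sigma.eta a).symm⟩
  · rintro x y ⟨i, a, b, hab, rfl, rfl⟩
    exact ⟨i, b, a, (hT i).symm hab, rfl, rfl⟩
  · rintro x y z hxy hyz
    replace hxy := (sumB_rel_iff hne x y).mp hxy
    replace hyz := (sumB_rel_iff hne y z).mp hyz
    refine (sumB_rel_iff hne x z).mpr ?_
    obtain ⟨i, h1, h2, h3⟩ := hxy
    obtain ⟨k, h1', h2', h3'⟩ := hyz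
    have hik : i = k := by rw [← h2, h1']
    subst hik
    exact ⟨i, h1, h2', (hT _).trans h3 h3'⟩
  · obtain ⟨i⟩ := (inferInstance : Nonempty ι)
    exact ⟨⟨i, Classical.choice (hne i)⟩⟩
  · intro I I' H H' hH hH' U U' hUo hUne hU'o hU'ne hcross
    obtain ⟨i₀, hcU, hcU'⟩ := unique_value (R := sumB f) (Sigma.fst)
      (fun {x y} h => by obtain ⟨i, a, b, hab, rfl, rfl⟩ := h; rfl)
      (fun c => sum_idx_meas c) hH hH' hUo hUne hU'o hU'ne hcross
    have hH₂ : BPM (f i₀).ms (fun w => getC f hne i₀ (H w)) :=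
      BPM.comp (getC_meas hne i₀) hH
    have hH₂' : BPM (f i₀).ms (fun w => getC f hne i₀ (H' w)) :=
      BPM.comp (getC_meas hne i₀) hH'
    have hcross₂ : CmgIn (Bx U U')
        {v : WSp (I ⊕ I') | (f i₀).rel (getC f hne i₀ (H (prj Sum.inl v)))
          (getC f hne i₀ (H' (prj Sum.inr v)))} := by
      have ha : CmgIn (Bx U U') (prj Sum.inl ⁻¹' {w | (H w).1 = i₀}) :=
        hcU.pullback Sum.inl_injective (fun v hv => hv.1)
      have hb : CmgIn (Bx U U') (prj Sum.inr ⁻¹' {w | (H' w).1 = i₀}) :=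
        hcU'.pullback Sum.inr_injective (fun v hv => hv.2)
      refine ((hcross.inter ha).inter hb).mono_right ?_
      rintro v ⟨⟨hrel, h1⟩, h2⟩
      obtain ⟨i, e1, e2, e3⟩ := (sumB_rel_iff hne _ _).mp hrel
      have : i = i₀ := by rw [← e1]; exact h1
      subst this
      exact e3
    obtain ⟨y₂, hy₂⟩ := (hT i₀).pinned I I' _ _ hH₂ hH₂' U U' hUo hUne hU'o hU'ne hcross₂
    refine ⟨⟨i₀, y₂⟩, ?_⟩
    refine (hcU.inter hy₂).mono_right ?_
    rintro w ⟨h1, h2⟩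
    show (sumB f).rel (H w) ⟨i₀, y₂⟩
    refine (sumB_rel_iff hne _ _).mpr ?_
    exact ⟨i₀, h1, rfl, by rwa [getC_mk]⟩

theorem tame_deltaTwo : Tame deltaTwo := by
  refine ⟨fun x => rfl, fun h => h.symm, fun h1 h2 => h1.trans h2, ⟨ULift.up false⟩, ?_, ?_⟩
  · have he : {p : ULift Bool × ULift Bool | p.1 = p.2} =
        ⋃ b : ULift Bool, (Prod.fst ⁻¹' {b}) ∩ (Prod.snd ⁻¹' {b}) := by
      ext p
      simp only [mem_setOf_eq, mem_iUnion, mem_inter_iff, mem_preimage, mem_singleton_iff]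
      constructor
      · intro h; exact ⟨p.2, h, rfl⟩
      · rintro ⟨b, h1, h2⟩; rw [h1, h2]
    letI : MeasurableSpace (ULift Bool) := ⊤
    show MeasurableSet {p : ULift Bool × ULift Bool | p.1 = p.2}
    rw [he]
    refine MeasurableSet.iUnion fun b => MeasurableSet.inter ?_ ?_
    · exact measurable_fst (show MeasurableSet {b} from trivial)
    · exact measurable_snd (show MeasurableSet {b} from trivial)
  · intro I I' H H' hH hH' U U' hUo hUne hU'o hU'ne hcross
    haveI : Countable deltaTwo.carrier := inferInstanceAs (Countable (ULift Bool))
    obtain ⟨c, hc, -⟩ := unique_value (R := deltaTwo) (fun y => y)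
      (fun {x y} h => h) (fun c => trivial) hH hH' hUo hUne hU'o hU'ne hcross
    exact ⟨c, hc⟩

end SumDelta

section IterInduction

variable (Γ : Type) [Group Γ] [Countable Γ]

lemma iterJump_zero (E : BorelEqvRel) : iterJump Γ E 0 = E :=
  Ordinal.limitRecOn_zero _ _ _

lemma iterJump_succ (E : BorelEqvRel) (o : Ordinal) :
    iterJump Γ E (Order.succ o) = jumpB Γ (iterJump Γ E o) :=
  Ordinal.limitRecOn_succ _ _ _ _

lemma iterJump_limit (E : BorelEqvRel) {o : Ordinal} (h : Order.IsSuccLimit o) :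
    iterJump Γ E o =
      jumpB Γ (sumB (fun i : {β : Ordinal // β < o} => iterJump Γ E i.1)) := by
  unfold iterJump
  rw [Ordinal.limitRecOn_limit _ _ _ _ h]

theorem tame_iterJump : ∀ (α : Ordinal), α.card ≤ Cardinal.aleph0 →
    Tame (iterJump Γ deltaTwo α) := by
  intro α
  induction α using Ordinal.induction with
  | h β IH =>
    intro hβ
    rcases Ordinal.zero_or_succ_or_isSuccLimit β with rfl | ⟨γ, rfl⟩ | hl
    · rw [iterJump_zero]
      exact tame_deltaTwo
    · rw [iterJump_succ]
      refine tame_jumpB Γ (IH γ (Order.lt_succ γ) ?_)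
      exact le_trans (Ordinal.card_le_card (le_of_lt (Order.lt_succ γ))) hβ
    · rw [iterJump_limit Γ _ hl]
      haveI hcnt : Countable {β' : Ordinal // β' < β} := by
        rw [← Cardinal.mk_le_aleph0_iff]
        have h1 : Cardinal.mk {β' : Ordinal // β' < β} = Cardinal.lift.{1} β.card :=
          Ordinal.mk_Iio_ordinal β
        rw [h1]
        exact Cardinal.lift_le_aleph0.mpr hβ
      haveI hne : Nonempty {β' : Ordinal // β' < β} := ⟨⟨0, hl.pos⟩⟩
      refine tame_jumpB Γ (tame_sumB fun i => IH i.1 i.2 ?_)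
      exact le_trans (Ordinal.card_le_card (le_of_lt i.2)) hβ

end IterInduction

section Final

/-- `F₀ = Δ(ω)`. -/
def F0 : BorelEqvRel := ⟨ULift ℕ, ⊤, Eq⟩

lemma F1_iff (u v : Col) : (fsJumpB F0).rel u v ↔ Set.range u = Set.range v := by
  show Set.range (fun n => {z : ULift ℕ | u n = z}) =
      Set.range (fun n => {z : ULift ℕ | v n = z}) ↔ _
  have hs : ∀ (u : Col), (fun n => {z : ULift ℕ | u n = z}) =
      (fun n => ({u n} : Set (ULift ℕ))) := by
    intro u
    funext n
    ext z
    simp [eq_comm]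
  rw [hs u, hs v]
  have hr : ∀ (u : Col), Set.range (fun n => ({u n} : Set (ULift ℕ))) =
      (fun a => ({a} : Set (ULift ℕ))) '' Set.range u := by
    intro u
    exact Set.range_comp _ _
  rw [hr u, hr v]
  exact Set.image_eq_image Set.singleton_injective

/-- class-of-subsets coding map -/
def Cls (A : Set (ULift ℕ)) : Set Col := {z | Set.range z = A}

lemma F2_iff (x y : WSp ℕ) :
    (fsJumpB (fsJumpB F0)).rel x y ↔
      ((∀ n, ∃ m, Set.range (x n) = Set.range (y m)) ∧
        (∀ m, ∃ n, Set.range (x n) = Set.range (y m))) := by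
  have hcl : ∀ x : WSp ℕ, (fun n => {z : Col | (fsJumpB F0).rel (x n) z}) =
      fun n => Cls (Set.range (x n)) := by
    intro x
    funext n
    ext z
    exact (F1_iff (x n) z).trans eq_comm
  show Set.range (fun n => {z : Col | (fsJumpB F0).rel (x n) z}) =
      Set.range (fun n => {z : Col | (fsJumpB F0).rel (y n) z}) ↔ _
  rw [hcl x, hcl y]
  constructor
  · intro h
    constructor
    · intro n
      have : Cls (Set.range (x n)) ∈ Set.range (fun m => Cls (Set.range (y m))) := by
        rw [← h]; exact ⟨n, rfl⟩
      obtain ⟨m, hm⟩ := this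
      refine ⟨m, ?_⟩
      have hx : x n ∈ Cls (Set.range (x n)) := rfl
      rw [← hm] at hx
      exact (hx : Set.range (x n) = Set.range (y m))
    · intro m
      have : Cls (Set.range (y m)) ∈ Set.range (fun n => Cls (Set.range (x n))) := by
        rw [h]; exact ⟨m, rfl⟩
      obtain ⟨n, hn⟩ := this
      refine ⟨n, ?_⟩
      have hy : y m ∈ Cls (Set.range (y m)) := rfl
      rw [← hn] at hy
      exact (hy : Set.range (y m) = Set.range (x n)).symm
  · rintro ⟨h1, h2⟩
    ext S
    constructor
    · rintro ⟨n, rfl⟩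
      obtain ⟨m, hm⟩ := h1 n
      exact ⟨m, by show Cls (Set.range (y m)) = Cls (Set.range (x n)); rw [hm]⟩
    · rintro ⟨m, rfl⟩
      obtain ⟨n, hn⟩ := h2 m
      exact ⟨n, by show Cls (Set.range (x n)) = Cls (Set.range (y m)); rw [hn]⟩

/-- Measurable sets of `F₂` have the Baire property in the Cohen space. -/
lemma F2_bpm : ∀ S : Set (WSp ℕ), MeasurableSet[(fsJumpB (fsJumpB F0)).ms] S →
    BaireMeasurableSet S := by
  have hle : (fsJumpB (fsJumpB F0)).ms ≤ BPσ (WSp ℕ) := by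
    refine iSup_le fun n => ?_
    refine MeasurableSpace.le_def.mpr ?_
    intro S hS
    obtain ⟨T, -, rfl⟩ := MeasurableSpace.measurableSet_comap.mp hS
    have ho : IsOpen ((fun w : WSp ℕ => w n) ⁻¹' (T : Set Col)) :=
      (isOpen_discrete _).preimage (continuous_apply n)
    exact ho.baireMeasurableSet
  intro S hS
  exact hle S hS

/-- canonical enumeration of a nonempty set of naturals -/
noncomputable def enumOf {A : Set (ULift ℕ)} (hA : A.Nonempty) : Col := by
  classical
  exact fun k => if ULift.up k ∈ A then ULift.up k else hA.choose

lemma range_enumOf {A : Set (ULift ℕ)} (hA : A.Nonempty) : Set.range (enumOf hA) = A := by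
  classical
  ext x
  constructor
  · rintro ⟨k, rfl⟩
    by_cases h : ULift.up k ∈ A
    · simpa [enumOf, h] using h
    · simpa [enumOf, h] using hA.choose_spec
  · intro hx
    refine ⟨x.down, ?_⟩
    have : ULift.up x.down = x := rfl
    simp [enumOf, this, hx]

lemma dense_of_cyl {I : Type} {D : Set (WSp I)}
    (h : ∀ (s : Finset I) (g : WSp I), ∃ w ∈ D, w ∈ Cyl s g) : Dense D := by
  rw [dense_iff_inter_open]
  rintro U hUo ⟨x, hx⟩
  obtain ⟨s, hs⟩ := cyl_subset_of_isOpen hUo hx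
  obtain ⟨w, hwD, hwc⟩ := h s x
  exact ⟨w, hs hwc, hwD⟩

lemma isOpen_evalSet {I : Type} (i : I) (P : Col → Prop) :
    IsOpen {w : WSp I | P (w i)} :=
  (isOpen_discrete {c : Col | P c}).preimage (continuous_apply i)

lemma isOpen_evalSet₂ {I : Type} (i j : I) (P : Col → Col → Prop) :
    IsOpen {w : WSp I | P (w i) (w j)} := by
  have : {w : WSp I | P (w i) (w j)} =
      (fun w : WSp I => (w i, w j)) ⁻¹' {p : Col × Col | P p.1 p.2} := rfl
  rw [this]
  exact (isOpen_discrete _).preimage ((continuous_apply i).prodMk (continuous_apply j))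

/-- the "some column has range `A`" sets are dense open. -/
lemma mem_residual_DA {A : Set (ULift ℕ)} (hA : A.Nonempty) :
    {w : WSp ℕ | ∃ n, Set.range (w n) = A} ∈ residual (WSp ℕ) := by
  refine residual_of_dense_open ?_ ?_
  · have : {w : WSp ℕ | ∃ n, Set.range (w n) = A} =
        ⋃ n, {w : WSp ℕ | Set.range (w n) = A} := by
      ext w; simp
    rw [this]
    exact isOpen_iUnion fun n => isOpen_evalSet n (fun c => Set.range c = A)
  · refine dense_of_cyl fun s g => ?_
    obtain ⟨n, hn⟩ := Infinite.exists_notMem_finset s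
    refine ⟨Function.update g n (enumOf hA), ⟨n, ?_⟩, ?_⟩
    · rw [Function.update_self]
      exact range_enumOf hA
    · intro i hi
      exact Function.update_of_ne (fun he => hn (by rw [← he]; exact hi)) _ _

/-- generic pairs have equal column-range families. -/
lemma cross_residual :
    {v : WSp (ℕ ⊕ ℕ) | (∀ n, ∃ m, Set.range (v (Sum.inl n)) = Set.range (v (Sum.inr m))) ∧
      (∀ m, ∃ n, Set.range (v (Sum.inl n)) = Set.range (v (Sum.inr m)))} ∈
        residual (WSp (ℕ ⊕ ℕ)) := by
  have h1 : ∀ n : ℕ, {v : WSp (ℕ ⊕ ℕ) |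
      ∃ m, Set.range (v (Sum.inl n)) = Set.range (v (Sum.inr m))} ∈ residual _ := by
    intro n
    refine residual_of_dense_open ?_ ?_
    · have : {v : WSp (ℕ ⊕ ℕ) | ∃ m, Set.range (v (Sum.inl n)) = Set.range (v (Sum.inr m))} =
          ⋃ m, {v : WSp (ℕ ⊕ ℕ) | Set.range (v (Sum.inl n)) = Set.range (v (Sum.inr m))} := by
        ext v; simp
      rw [this]
      exact isOpen_iUnion fun m =>
        isOpen_evalSet₂ (Sum.inl n) (Sum.inr m) (fun c d => Set.range c = Set.range d)
    · refine dense_of_cyl fun s g => ?_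
      obtain ⟨m, hm⟩ := Infinite.exists_notMem_finset (s.preimage Sum.inr Sum.inr_injective.injOn)
      have hm' : Sum.inr m ∉ s := fun hin => hm (Finset.mem_preimage.mpr hin)
      refine ⟨Function.update g (Sum.inr m) (g (Sum.inl n)), ⟨m, ?_⟩, ?_⟩
      · rw [Function.update_self, Function.update_of_ne (by simp)]
      · intro i hi
        exact Function.update_of_ne (fun he => hm' (by rw [← he]; exact hi)) _ _
  have h2 : ∀ m : ℕ, {v : WSp (ℕ ⊕ ℕ) |
      ∃ n, Set.range (v (Sum.inl n)) = Set.range (v (Sum.inr m))} ∈ residual _ := by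
    intro m
    refine residual_of_dense_open ?_ ?_
    · have : {v : WSp (ℕ ⊕ ℕ) | ∃ n, Set.range (v (Sum.inl n)) = Set.range (v (Sum.inr m))} =
          ⋃ n, {v : WSp (ℕ ⊕ ℕ) | Set.range (v (Sum.inl n)) = Set.range (v (Sum.inr m))} := by
        ext v; simp
      rw [this]
      exact isOpen_iUnion fun n =>
        isOpen_evalSet₂ (Sum.inl n) (Sum.inr m) (fun c d => Set.range c = Set.range d)
    · refine dense_of_cyl fun s g => ?_
      obtain ⟨n, hn⟩ := Infinite.exists_notMem_finset (s.preimage Sum.inl Sum.inl_injective.injOn)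
      have hn' : Sum.inl n ∉ s := fun hin => hn (Finset.mem_preimage.mpr hin)
      refine ⟨Function.update g (Sum.inl n) (g (Sum.inr m)), ⟨n, ?_⟩, ?_⟩
      · rw [Function.update_self, Function.update_of_ne (by simp)]
      · intro i hi
        exact Function.update_of_ne (fun he => hn' (by rw [← he]; exact hi)) _ _
  have e : {v : WSp (ℕ ⊕ ℕ) |
      (∀ n, ∃ m, Set.range (v (Sum.inl n)) = Set.range (v (Sum.inr m))) ∧
        (∀ m, ∃ n, Set.range (v (Sum.inl n)) = Set.range (v (Sum.inr m)))} =
      (⋂ n, {v : WSp (ℕ ⊕ ℕ) | ∃ m, Set.range (v (Sum.inl n)) = Set.range (v (Sum.inr m))}) ∩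
        ⋂ m, {v : WSp (ℕ ⊕ ℕ) | ∃ n, Set.range (v (Sum.inl n)) = Set.range (v (Sum.inr m))} := by
    ext v
    simp only [mem_setOf_eq, mem_inter_iff, mem_iInter]
  rw [e]
  exact Filter.inter_mem (countable_iInter_mem.mpr h1) (countable_iInter_mem.mpr h2)

/-- MAIN abstract theorem: `F₂` does not reduce to any tame relation. -/
theorem main_abstract (J : BorelEqvRel) (hJ : Tame J) :
    ¬ RedB (fsJumpB (fsJumpB F0)) J := by
  rintro ⟨f, hf, hred⟩
  -- f is Baire measurable
  have hBPM : BPM J.ms (f : WSp ℕ → J.carrier) := by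
    intro S hS
    exact F2_bpm _ (hf hS)
  -- the cross set is comeager
  have hcross : CmgIn (Bx (univ : Set (WSp ℕ)) (univ : Set (WSp ℕ)))
      {v | J.rel (f (prj Sum.inl v)) (f (prj Sum.inr v))} := by
    rw [CmgIn]
    have hsub : Bx (univ : Set (WSp ℕ)) (univ : Set (WSp ℕ)) \
        {v | J.rel (f (prj Sum.inl v)) (f (prj Sum.inr v))} ⊆
        {v : WSp (ℕ ⊕ ℕ) |
          (∀ n, ∃ m, Set.range (v (Sum.inl n)) = Set.range (v (Sum.inr m))) ∧
            (∀ m, ∃ n, Set.range (v (Sum.inl n)) = Set.range (v (Sum.inr m)))}ᶜ := by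
      intro v hv
      intro hmem
      apply hv.2
      have hF2 : (fsJumpB (fsJumpB F0)).rel (prj Sum.inl v) (prj Sum.inr v) := by
        rw [F2_iff]
        exact hmem
      exact (hred _ _).mp hF2
    refine IsMeagre.mono hsub ?_
    rw [IsMeagre, compl_compl]
    exact cross_residual
  haveI : Nonempty (WSp ℕ) := ⟨fun _ => default⟩
  obtain ⟨y₀, hy₀⟩ := hJ.pinned ℕ ℕ f f hBPM hBPM univ univ isOpen_univ univ_nonempty
    isOpen_univ univ_nonempty hcross
  -- pick the generic point w₀
  obtain ⟨w₀, -, hw₀⟩ := hy₀.nonempty isOpen_univ univ_nonempty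
  -- every nonempty set appears among the ranges of w₀
  have hall : ∀ A : Set (ULift ℕ), A.Nonempty → ∃ m, Set.range (w₀ m) = A := by
    intro A hA
    have hDA : CmgIn (univ : Set (WSp ℕ)) {w : WSp ℕ | ∃ n, Set.range (w n) = A} := by
      rw [CmgIn]
      refine IsMeagre.mono (diff_subset_compl _ _) ?_
      rw [IsMeagre, compl_compl]
      exact mem_residual_DA hA
    obtain ⟨wA, -, hwA1, hwA2⟩ := (hy₀.inter hDA).nonempty isOpen_univ univ_nonempty
    obtain ⟨n, hn⟩ := hwA2
    have hJr : J.rel (f wA) (f w₀) := hJ.trans hwA1 (hJ.symm hw₀)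
    have hF2 : (fsJumpB (fsJumpB F0)).rel wA w₀ := (hred _ _).mpr hJr
    rw [F2_iff] at hF2
    obtain ⟨m, hm⟩ := hF2.1 n
    exact ⟨m, by rw [← hm, hn]⟩
  -- diagonalize
  set A' : Set (ULift ℕ) := {x : ULift ℕ | ∃ k : ℕ,
    (x = ULift.up (2*k) ∧ ULift.up (2*k) ∉ Set.range (w₀ k)) ∨
      (x = ULift.up (2*k+1) ∧ ULift.up (2*k) ∈ Set.range (w₀ k))} with hA'def
  have hA'ne : A'.Nonempty := by
    by_cases h : ULift.up (2*0) ∈ Set.range (w₀ 0)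
    · exact ⟨ULift.up (2*0+1), ⟨0, Or.inr ⟨rfl, h⟩⟩⟩
    · exact ⟨ULift.up (2*0), ⟨0, Or.inl ⟨rfl, h⟩⟩⟩
  obtain ⟨m, hm⟩ := hall A' hA'ne
  have hmem : ULift.up (2*m) ∈ A' ↔ ULift.up (2*m) ∉ Set.range (w₀ m) := by
    constructor
    · rintro ⟨k, hk | hk⟩
      · obtain ⟨h1, h2⟩ := hk
        have : (2*m : ℕ) = 2*k := congrArg ULift.down h1
        have hk' : k = m := by omega
        subst hk'
        exact h2
      · obtain ⟨h1, -⟩ := hk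
        have : (2*m : ℕ) = 2*k+1 := congrArg ULift.down h1
        omega
    · intro h
      exact ⟨m, Or.inl ⟨rfl, h⟩⟩
  rw [← hm] at hmem
  by_cases h : ULift.up (2*m) ∈ Set.range (w₀ m)
  · exact (hmem.mp h) h
  · exact h (hmem.mpr h)

lemma FStower_two : FStower 2 = fsJumpB (fsJumpB F0) := by
  have h1 : (1 : Ordinal) = Order.succ 0 := by
    rw [← Ordinal.add_one_eq_succ, zero_add]
  have h2 : (2 : Ordinal) = Order.succ 1 := by
    rw [← Ordinal.add_one_eq_succ, one_add_one_eq_two]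
  unfold FStower
  rw [h2, Ordinal.limitRecOn_succ, h1, Ordinal.limitRecOn_succ, Ordinal.limitRecOn_zero]
  rfl

end Final

end CC

theorem FStower_two_not_borelReducible_iterJump
    (Γ : Type) [Group Γ] [Countable Γ] (α : Ordinal)
    (hcount : α.card ≤ Cardinal.aleph0) :
    ¬ RedB (FStower 2) (iterJump Γ deltaTwo α) := by
  rw [CC.FStower_two]
  exact CC.main_abstract _ (CC.tame_iterJump Γ α hcount)
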